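/- Let G = H × ⟨a⟩ where H is an abelian group of odd order and a has order 2. If A is a Schur ring over G with Σ_{h∈H} h ∈ A and {a} not an A-set, then there exists a nontrivial subgroup L ≤ H such that A is the H/L-wreath product: every basic set of A outside H is a union of L-cosets. -/

import Mathlib

open scoped Pointwise

noncomputable def clsum {G : Type*} [Group G] [Fintype G] (s : Set G) :
    MonoidAlgebra ℤ G :=
  ∑ x ∈ s.toFinite.toFinset, MonoidAlgebra.of ℤ G x

structure SchurRing (G : Type*) [Group G] [Fintype G] where
  P : Set (Set G)
  one_mem : ({(1 : G)} : Set G) ∈ P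
  nonempty_cls : ∀ X ∈ P, X.Nonempty
  cover : ∀ g : G, ∃ X ∈ P, g ∈ X
  disj : ∀ X ∈ P, ∀ Y ∈ P, X ≠ Y → Disjoint X Y
  inv_mem : ∀ X ∈ P, X⁻¹ ∈ P
  mul_closed : ∀ X ∈ P, ∀ Y ∈ P,
    clsum X * clsum Y ∈ Submodule.span ℤ (clsum '' P)

def SchurRing.isASet {G : Type*} [Group G] [Fintype G] (A : SchurRing G) (X : Set G) : Prop :=
  clsum X ∈ Submodule.span ℤ (clsum '' A.P)

namespace Stmt11Aux

open scoped Classical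

variable {G : Type*} [CommGroup G] [Fintype G]

/-- coefficient of a class sum -/
lemma clsum_apply (s : Set G) (g : G) : (clsum s).coeff g = if g ∈ s then 1 else 0 := by
  unfold clsum
  rw [MonoidAlgebra.coeff_sum, Finset.sum_apply']
  simp only [MonoidAlgebra.of_apply, MonoidAlgebra.coeff_single, Finsupp.single_apply]
  rw [Finset.sum_ite_eq' _ g (fun _ => (1 : ℤ))]
  simp [Set.Finite.mem_toFinset]

noncomputable abbrev SA (A : SchurRing G) : Submodule ℤ (MonoidAlgebra ℤ G) :=
  Submodule.span ℤ (clsum '' A.P)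

variable {A : SchurRing G}

lemma basic_mem {X : Set G} (hX : X ∈ A.P) : clsum X ∈ SA A :=
  Submodule.subset_span ⟨X, hX, rfl⟩

lemma basic_eq {X W : Set G} {x : G} (hX : X ∈ A.P) (hW : W ∈ A.P)
    (hx : x ∈ X) (hxW : x ∈ W) : X = W := by
  by_contra h
  exact Set.disjoint_left.mp (A.disj X hX W hW h) hx hxW

/-- coefficients of elements of the span are constant on basic sets -/
lemma const_on {ξ : MonoidAlgebra ℤ G} (hξ : ξ ∈ SA A) {X : Set G} (hX : X ∈ A.P)
    {x y : G} (hx : x ∈ X) (hy : y ∈ X) : ξ.coeff x = ξ.coeff y := by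
  induction hξ using Submodule.span_induction with
  | mem w h =>
    obtain ⟨W, hW, rfl⟩ := h
    rw [clsum_apply, clsum_apply]
    by_cases hxW : x ∈ W
    · have hE : X = W := basic_eq hX hW hx hxW
      rw [if_pos hxW, if_pos (hE ▸ hy)]
    · have hyW : y ∉ W := by
        intro hyW
        exact hxW ((basic_eq hX hW hy hyW) ▸ hx)
      rw [if_neg hxW, if_neg hyW]
  | zero => simp
  | add u v hu hv h1 h2 => rw [MonoidAlgebra.coeff_add, Finsupp.add_apply, Finsupp.add_apply, h1, h2]
  | smul a u hu h1 => rw [MonoidAlgebra.coeff_smul_apply, MonoidAlgebra.coeff_smul_apply, h1]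

lemma mul_mem_SA {ξ η : MonoidAlgebra ℤ G} (hξ : ξ ∈ SA A) (hη : η ∈ SA A) :
    ξ * η ∈ SA A := by
  induction hξ, hη using Submodule.span_induction₂ with
  | mem_mem u v hu hv =>
    obtain ⟨U, hU, rfl⟩ := hu
    obtain ⟨V, hV, rfl⟩ := hv
    exact A.mul_closed U hU V hV
  | zero_left v hv => rw [zero_mul]; exact Submodule.zero_mem _
  | zero_right u hu => rw [mul_zero]; exact Submodule.zero_mem _
  | add_left u v w hu hv hw h1 h2 => rw [add_mul]; exact Submodule.add_mem _ h1 h2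
  | add_right u v w hu hv hw h1 h2 => rw [mul_add]; exact Submodule.add_mem _ h1 h2
  | smul_left r u v hu hv h1 => rw [smul_mul_assoc]; exact Submodule.smul_mem _ r h1
  | smul_right r u v hu hv h1 => rw [mul_smul_comm]; exact Submodule.smul_mem _ r h1

/-- a union of basic sets is an A-set -/
lemma union_mem {V : Set G} (h : ∀ X ∈ A.P, (X ∩ V).Nonempty → X ⊆ V) :
    clsum V ∈ SA A := by
  have hPfin : A.P.Finite := Set.toFinite _
  set T : Finset (Set G) := (hPfin.subset (Set.sep_subset A.P (· ⊆ V))).toFinset with hT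
  have key : clsum V = ∑ X ∈ T, clsum X := by
    apply MonoidAlgebra.ext
    apply Finsupp.ext
    intro g
    rw [MonoidAlgebra.coeff_sum, Finset.sum_apply', clsum_apply]
    by_cases hg : g ∈ V
    · obtain ⟨W, hW, hgW⟩ := A.cover g
      have hWV : W ⊆ V := h W hW ⟨g, hgW, hg⟩
      have hWT : W ∈ T := by
        rw [hT, Set.Finite.mem_toFinset]
        exact ⟨hW, hWV⟩
      rw [if_pos hg, Finset.sum_eq_single W]
      · rw [clsum_apply, if_pos hgW]
      · intro X hXT hne
        have hXP : X ∈ A.P := ((Set.Finite.mem_toFinset _).mp hXT).1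
        rw [clsum_apply, if_neg]
        intro hgX
        exact hne (basic_eq hXP hW hgX hgW)
      · intro hc; exact absurd hWT hc
    · rw [if_neg hg, Finset.sum_eq_zero]
      intro X hXT
      have hXV : X ⊆ V := ((Set.Finite.mem_toFinset _).mp hXT).2
      rw [clsum_apply, if_neg (fun hx => hg (hXV hx))]
  rw [key]
  exact Submodule.sum_mem _ (fun X hXT => basic_mem ((Set.Finite.mem_toFinset _).mp hXT).1)

end Stmt11Aux
namespace Stmt11Aux

variable {G : Type*} [CommGroup G] [Fintype G] {A : SchurRing G}

open scoped Classical

lemma clsum_mul_apply (X Y : Set G) (g : G) :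
    (clsum X * clsum Y).coeff g =
      ∑ x ∈ X.toFinite.toFinset, ∑ y ∈ Y.toFinite.toFinset,
        if x * y = g then 1 else 0 := by
  unfold clsum
  rw [Finset.sum_mul_sum, MonoidAlgebra.coeff_sum, Finset.sum_apply']
  refine Finset.sum_congr rfl (fun x _ => ?_)
  rw [MonoidAlgebra.coeff_sum, Finset.sum_apply']
  refine Finset.sum_congr rfl (fun y _ => ?_)
  rw [← map_mul, MonoidAlgebra.of_apply, MonoidAlgebra.coeff_single, Finsupp.single_apply]

lemma sum_sq_ind {V : Set G} (hinj : Set.InjOn (fun t => t * t) V) (g : G) :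
    (∑ x ∈ V.toFinite.toFinset, ∑ y ∈ V.toFinite.toFinset,
        if x * y = g then (1 : ZMod 2) else 0)
      = if g ∈ (fun t => t * t) '' V then 1 else 0 := by
  set Vf := V.toFinite.toFinset with hVf
  rw [← Finset.sum_product']
  rw [← Finset.sum_filter_add_sum_filter_not (Vf ×ˢ Vf) (fun p => p.1 = p.2)]
  have h2 : (∑ p ∈ (Vf ×ˢ Vf).filter (fun p => ¬ p.1 = p.2),
      if p.1 * p.2 = g then (1 : ZMod 2) else 0) = 0 := by
    apply Finset.sum_involution (g := fun p _ => p.swap)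
    · intro p hp
      have : (if p.2 * p.1 = g then (1 : ZMod 2) else 0)
          = if p.1 * p.2 = g then (1 : ZMod 2) else 0 := by rw [mul_comm]
      simp only [Prod.fst_swap, Prod.snd_swap, this]
      exact CharTwo.add_self_eq_zero _
    · intro p hp _
      simp only [Finset.mem_filter] at hp
      intro hsw
      exact hp.2 ((congrArg Prod.fst hsw).symm)
    · intro p hp
      exact Prod.swap_swap p
    · intro p hp
      simp only [Finset.mem_filter, Finset.mem_product, Prod.fst_swap, Prod.snd_swap] at hp ⊢
      exact ⟨⟨hp.1.2, hp.1.1⟩, fun h => hp.2 h.symm⟩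
  have h1 : (∑ p ∈ (Vf ×ˢ Vf).filter (fun p => p.1 = p.2),
      if p.1 * p.2 = g then (1 : ZMod 2) else 0)
      = ∑ x ∈ Vf, if x * x = g then (1 : ZMod 2) else 0 := by
    apply Finset.sum_nbij' (i := fun p => p.1) (j := fun x => (x, x))
    · intro p hp
      simp only [Finset.mem_filter, Finset.mem_product] at hp
      exact hp.1.1
    · intro x hx
      simp [Finset.mem_filter, Finset.mem_product, hx]
    · intro p hp
      simp only [Finset.mem_filter] at hp
      exact Prod.ext rfl hp.2
    · intro x hx
      rfl
    · intro p hp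
      simp only [Finset.mem_filter] at hp
      rw [← hp.2]
  rw [h1, h2, add_zero]
  by_cases hg : g ∈ (fun t => t * t) '' V
  · obtain ⟨t, htV, ht⟩ := hg
    rw [if_pos ⟨t, htV, ht⟩, Finset.sum_eq_single_of_mem t ((Set.Finite.mem_toFinset _).mpr htV)]
    · rw [if_pos ht]
    · intro x hx hne
      rw [if_neg]
      intro hxx
      exact hne (hinj ((Set.Finite.mem_toFinset _).mp hx) htV (by simpa using hxx.trans ht.symm))
  · rw [if_neg hg, Finset.sum_eq_zero]
    intro x hx
    rw [if_neg]
    intro hxx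
    exact hg ⟨x, (Set.Finite.mem_toFinset _).mp hx, hxx⟩

lemma sq_coeff_parity {V : Set G} (hinj : Set.InjOn (fun t => t * t) V) (g : G) :
    (((clsum V * clsum V).coeff g : ℤ) : ZMod 2)
      = if g ∈ (fun t => t * t) '' V then 1 else 0 := by
  rw [clsum_mul_apply]
  rw [← sum_sq_ind hinj g]
  push_cast [apply_ite (fun n : ℤ => (n : ZMod 2))]
  rfl

lemma sq_image_mem {V : Set G} (hV : clsum V ∈ SA A) (hinj : Set.InjOn (fun t => t * t) V) :
    clsum ((fun t => t * t) '' V) ∈ SA A := by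
  apply union_mem
  rintro X hX ⟨x, hxX, hxW⟩ y hyX
  have hc : (clsum V * clsum V).coeff x = (clsum V * clsum V).coeff y :=
    const_on (mul_mem_SA hV hV) hX hxX hyX
  have px := sq_coeff_parity hinj x
  have py := sq_coeff_parity hinj y
  rw [hc] at px
  rw [px, if_pos hxW] at py
  by_contra hy
  rw [if_neg hy] at py
  exact one_ne_zero py

end Stmt11Aux
set_option linter.unusedSectionVars false

namespace Stmt11Aux

open scoped Classical

variable {H : Type*} [CommGroup H] [Fintype H]

/-- the involution of the Z2-factor -/
def aa (H : Type*) [CommGroup H] : H × Multiplicative (ZMod 2) :=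
  ((1 : H), Multiplicative.ofAdd (1 : ZMod 2))

def Hr (H : Type*) [CommGroup H] : Set (H × Multiplicative (ZMod 2)) :=
  Set.range fun h : H => (h, (1 : Multiplicative (ZMod 2)))

def sh (X : Set (H × Multiplicative (ZMod 2))) : Set H :=
  {h : H | (h, Multiplicative.ofAdd (1 : ZMod 2)) ∈ X}

def emb (U : Set H) : Set (H × Multiplicative (ZMod 2)) :=
  (fun h : H => (h, (1 : Multiplicative (ZMod 2)))) '' U

lemma m2_cases (z : Multiplicative (ZMod 2)) :
    z = 1 ∨ z = Multiplicative.ofAdd (1 : ZMod 2) := by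
  revert z; decide

lemma ofAdd_ne_one : Multiplicative.ofAdd (1 : ZMod 2) ≠ 1 := by decide

lemma ofAdd_mul_self :
    Multiplicative.ofAdd (1 : ZMod 2) * Multiplicative.ofAdd (1 : ZMod 2) = 1 := by decide

lemma ofAdd_inv :
    (Multiplicative.ofAdd (1 : ZMod 2))⁻¹ = Multiplicative.ofAdd (1 : ZMod 2) := by decide

lemma mem_Hr {x : H × Multiplicative (ZMod 2)} : x ∈ Hr H ↔ x.2 = 1 := by
  constructor
  · rintro ⟨h, rfl⟩; rfl
  · intro h2
    exact ⟨x.1, Prod.ext rfl h2.symm⟩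

lemma aa_not_Hr : aa H ∉ Hr H := by
  rw [mem_Hr]
  exact ofAdd_ne_one

lemma out_form {X : Set (H × Multiplicative (ZMod 2))} (hXc : X ⊆ (Hr H)ᶜ)
    {x : H × Multiplicative (ZMod 2)} (hx : x ∈ X) :
    x = (x.1, Multiplicative.ofAdd (1 : ZMod 2)) := by
  rcases m2_cases x.2 with h | h
  · exact absurd (mem_Hr.mpr h) (hXc hx)
  · exact Prod.ext rfl h

section odd

variable (hodd : Odd (Fintype.card H))
include hodd

lemma sq_inj : Function.Injective (fun h : H => h * h) := by
  intro x y hxy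
  have hxy' : x * x = y * y := hxy
  have h2 : (x * y⁻¹) * (x * y⁻¹) = 1 := by
    rw [mul_mul_mul_comm, hxy', mul_mul_mul_comm]
    simp
  have h3 : orderOf (x * y⁻¹) ∣ 2 :=
    orderOf_dvd_of_pow_eq_one (by rw [pow_two]; exact h2)
  rcases (Nat.dvd_prime Nat.prime_two).mp h3 with h4 | h4
  · have := orderOf_eq_one_iff.mp h4
    rwa [mul_inv_eq_one] at this
  · exfalso
    have h5 : (2 : ℕ) ∣ Fintype.card H := h4 ▸ orderOf_dvd_card
    rw [← Nat.not_even_iff_odd] at hodd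
    exact hodd (even_iff_two_dvd.mpr h5)

lemma sq_iter_id : ∃ n : ℕ, 0 < n ∧ ∀ h : H, (fun t : H => t * t)^[n] h = h := by
  have hb : Function.Bijective (fun t : H => t * t) :=
    Finite.injective_iff_bijective.mp (sq_inj hodd)
  set e : Equiv.Perm H := Equiv.ofBijective _ hb with he
  have happ : ∀ (k : ℕ) (h : H), (e ^ k) h = (fun t : H => t * t)^[k] h := by
    intro k
    induction k with
    | zero => intro h; simp
    | succ k ih =>
      intro h
      rw [pow_succ, Equiv.Perm.mul_apply, Function.iterate_succ_apply]
      rw [ih (e h)]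
      congr 1
  refine ⟨orderOf e, orderOf_pos e, fun h => ?_⟩
  rw [← happ, pow_orderOf_eq_one e]
  rfl

end odd

end Stmt11Aux
namespace Stmt11Aux

open scoped Classical

variable {H : Type*} [CommGroup H] [Fintype H]
variable {A : SchurRing (H × Multiplicative (ZMod 2))}

section withhH

variable (hH : clsum (Hr H) ∈ SA A)
include hH

lemma basic_in_or_out {X : Set (H × Multiplicative (ZMod 2))} (hX : X ∈ A.P) :
    X ⊆ Hr H ∨ X ⊆ (Hr H)ᶜ := by
  by_cases hall : ∀ x ∈ X, x ∈ Hr H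
  · exact Or.inl hall
  · push_neg at hall
    obtain ⟨y, hyX, hyn⟩ := hall
    right
    intro x hx hxHr
    have hc := const_on hH hX hx hyX
    rw [clsum_apply, clsum_apply, if_pos hxHr, if_neg hyn] at hc
    exact one_ne_zero hc

end withhH

section chain

variable (hodd : Odd (Fintype.card H))
include hodd

lemma sq_image_X {X : Set (H × Multiplicative (ZMod 2))} (hXc : X ⊆ (Hr H)ᶜ) :
    (fun t : H × Multiplicative (ZMod 2) => t * t) '' X
      = emb ((fun t : H => t * t) '' (sh X)) := by
  ext g
  constructor
  · rintro ⟨x, hxX, rfl⟩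
    have hxf := out_form hXc hxX
    refine ⟨x.1 * x.1, ⟨x.1, ?_, rfl⟩, ?_⟩
    · show (x.1, Multiplicative.ofAdd (1 : ZMod 2)) ∈ X
      rw [← hxf]; exact hxX
    · show ((x.1 * x.1, 1) : H × Multiplicative (ZMod 2)) = x * x
      conv_rhs => rw [hxf]
      rw [Prod.mk_mul_mk, ofAdd_mul_self]
  · rintro ⟨u, ⟨w, hw, rfl⟩, rfl⟩
    refine ⟨(w, Multiplicative.ofAdd (1 : ZMod 2)), hw, ?_⟩
    show (w, Multiplicative.ofAdd (1 : ZMod 2)) * (w, Multiplicative.ofAdd (1 : ZMod 2)) = (w * w, 1)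
    rw [Prod.mk_mul_mk, ofAdd_mul_self]

lemma sq_image_emb (U : Set H) :
    (fun t : H × Multiplicative (ZMod 2) => t * t) '' (emb U)
      = emb ((fun t : H => t * t) '' U) := by
  ext g
  constructor
  · rintro ⟨x, ⟨w, hw, rfl⟩, rfl⟩
    exact ⟨w * w, ⟨w, hw, rfl⟩, by simp [Prod.mk_mul_mk]⟩
  · rintro ⟨u, ⟨w, hw, rfl⟩, rfl⟩
    exact ⟨(w, 1), ⟨w, hw, rfl⟩, by simp [Prod.mk_mul_mk]⟩

lemma injOn_sq_X {X : Set (H × Multiplicative (ZMod 2))} (hXc : X ⊆ (Hr H)ᶜ) :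
    Set.InjOn (fun t : H × Multiplicative (ZMod 2) => t * t) X := by
  intro x hx y hy hxy
  have h1 : x.1 * x.1 = y.1 * y.1 := congrArg Prod.fst hxy
  have h2 : x.1 = y.1 := sq_inj hodd h1
  rw [out_form hXc hx, out_form hXc hy, h2]

lemma injOn_sq_emb (U : Set H) :
    Set.InjOn (fun t : H × Multiplicative (ZMod 2) => t * t) (emb U) := by
  rintro x ⟨w, hw, rfl⟩ y ⟨v, hv, rfl⟩ hxy
  have h1 : w * w = v * v := by
    have := congrArg Prod.fst hxy
    simpa using this
  rw [sq_inj hodd h1]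

lemma emb_sh_mem {X : Set (H × Multiplicative (ZMod 2))} (hX : X ∈ A.P)
    (hXc : X ⊆ (Hr H)ᶜ) : clsum (emb (sh X)) ∈ SA A := by
  set sq : H → H := fun t => t * t with hsq
  set F : Set H → Set H := fun U => sq '' U with hF
  have main : ∀ k : ℕ, clsum (emb (F^[k] (F (sh X)))) ∈ SA A := by
    intro k
    induction k with
    | zero =>
      have hbase := sq_image_mem (A := A) (basic_mem hX) (injOn_sq_X hodd hXc)
      rw [sq_image_X hodd hXc] at hbase
      simpa using hbase
    | succ k ih =>
      rw [Function.iterate_succ_apply']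
      have hstep := sq_image_mem (A := A) ih (injOn_sq_emb hodd _)
      rw [sq_image_emb hodd] at hstep
      exact hstep
  have FIter : ∀ (k : ℕ) (U : Set H), F^[k] U = sq^[k] '' U := by
    intro k
    induction k with
    | zero => intro U; simp
    | succ k ih =>
      intro U
      rw [Function.iterate_succ_apply', ih]
      show sq '' (sq^[k] '' U) = sq^[k+1] '' U
      rw [← Set.image_comp, ← Function.iterate_succ']
  obtain ⟨n, hn, hid⟩ := sq_iter_id hodd
  have hfinal : F^[n-1] (F (sh X)) = sh X := by
    rw [FIter]
    show sq^[n-1] '' (sq '' sh X) = sh X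
    rw [← Set.image_comp, ← Function.iterate_succ]
    have hsn : (n - 1).succ = n := by omega
    rw [hsn]
    have hidf : sq^[n] = id := funext (fun h => hid h)
    rw [hidf, Set.image_id]
  have := main (n - 1)
  rwa [hfinal] at this

end chain

end Stmt11Aux
namespace Stmt11Aux

open scoped Classical

variable {H : Type*} [CommGroup H] [Fintype H]
variable {A : SchurRing (H × Multiplicative (ZMod 2))}

lemma embf (U : Set H) :
    (emb U).toFinite.toFinset
      = U.toFinite.toFinset.image
          (fun h : H => ((h, 1) : H × Multiplicative (ZMod 2))) := by
  ext t
  simp [emb, Set.Finite.mem_toFinset]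

lemma eta_coeff (X : Set (H × Multiplicative (ZMod 2))) (u : H) :
    (clsum (X⁻¹) * clsum (emb (sh X))).coeff (u, Multiplicative.ofAdd (1 : ZMod 2))
      = ∑ w ∈ (sh X).toFinite.toFinset, if w * u⁻¹ ∈ sh X then (1 : ℤ) else 0 := by
  rw [clsum_mul_apply, embf, Finset.sum_comm]
  rw [Finset.sum_image (by intro a _ b _ h; exact (Prod.ext_iff.mp h).1)]
  refine Finset.sum_congr rfl (fun w hw => ?_)
  have hval : ((u, Multiplicative.ofAdd (1 : ZMod 2)) : H × Multiplicative (ZMod 2))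
        * (((w, 1) : H × Multiplicative (ZMod 2)))⁻¹
      = (u * w⁻¹, Multiplicative.ofAdd (1 : ZMod 2)) := by
    rw [Prod.inv_mk, Prod.mk_mul_mk, inv_one, mul_one]
  have hcond : ∀ y : H × Multiplicative (ZMod 2),
      (y * ((w, 1) : H × Multiplicative (ZMod 2))
          = (u, Multiplicative.ofAdd (1 : ZMod 2)))
        ↔ y = (u * w⁻¹, Multiplicative.ofAdd (1 : ZMod 2)) := by
    intro y
    rw [← eq_mul_inv_iff_mul_eq, hval]
  simp only [hcond]
  rw [Finset.sum_ite_eq' ((X⁻¹ : Set (H × Multiplicative (ZMod 2))).toFinite.toFinset)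
      ((u * w⁻¹, Multiplicative.ofAdd (1 : ZMod 2)))
      (fun _ => (1 : ℤ))]
  have hmemiff : ((u * w⁻¹, Multiplicative.ofAdd (1 : ZMod 2))
        ∈ (X⁻¹ : Set (H × Multiplicative (ZMod 2))).toFinite.toFinset)
      ↔ w * u⁻¹ ∈ sh X := by
    rw [Set.Finite.mem_toFinset, Set.mem_inv]
    have h3 : (((u * w⁻¹ : H), Multiplicative.ofAdd (1 : ZMod 2))
          : H × Multiplicative (ZMod 2))⁻¹
        = ((w * u⁻¹ : H), Multiplicative.ofAdd (1 : ZMod 2)) := by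
      rw [Prod.inv_mk, ofAdd_inv, mul_inv_rev, inv_inv, mul_comm]
    rw [h3]
    exact Iff.rfl
  exact if_congr hmemiff rfl rfl

lemma stab_key (hodd : Odd (Fintype.card H))
    {B X : Set (H × Multiplicative (ZMod 2))}
    (hB : B ∈ A.P) (haB : aa H ∈ B)
    (hX : X ∈ A.P) (hXc : X ⊆ (Hr H)ᶜ)
    {s : H} (hs : (s, Multiplicative.ofAdd (1 : ZMod 2)) ∈ B) :
    ∀ x ∈ X, ((s, 1) : H × Multiplicative (ZMod 2)) * x ∈ X := by
  have hYP : X⁻¹ ∈ A.P := A.inv_mem X hX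
  have hV : clsum (emb (sh X)) ∈ SA A := emb_sh_mem hodd hX hXc
  have hη : clsum (X⁻¹) * clsum (emb (sh X)) ∈ SA A := mul_mem_SA (basic_mem hYP) hV
  have h2 : (clsum (X⁻¹) * clsum (emb (sh X))).coeff (s, Multiplicative.ofAdd (1 : ZMod 2))
      = (clsum (X⁻¹) * clsum (emb (sh X))).coeff (aa H) := const_on hη hB hs haB
  have haan : aa H = ((1 : H), Multiplicative.ofAdd (1 : ZMod 2)) := rfl
  rw [haan, eta_coeff, eta_coeff] at h2
  have hrhs : (∑ w ∈ (sh X).toFinite.toFinset,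
        if w * (1 : H)⁻¹ ∈ sh X then (1 : ℤ) else 0)
      = ∑ w ∈ (sh X).toFinite.toFinset, (1 : ℤ) := by
    refine Finset.sum_congr rfl (fun w hw => ?_)
    rw [if_pos]
    rw [inv_one, mul_one]
    exact (Set.Finite.mem_toFinset _).mp hw
  rw [hrhs] at h2
  have hall : ∀ w ∈ (sh X).toFinite.toFinset, w * s⁻¹ ∈ sh X := by
    by_contra hcon
    push_neg at hcon
    obtain ⟨w₀, hw₀, hw₀n⟩ := hcon
    have hlt : (∑ w ∈ (sh X).toFinite.toFinset,
          if w * s⁻¹ ∈ sh X then (1 : ℤ) else 0)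
        < ∑ w ∈ (sh X).toFinite.toFinset, (1 : ℤ) := by
      apply Finset.sum_lt_sum
      · intro i hi
        split <;> norm_num
      · exact ⟨w₀, hw₀, by rw [if_neg hw₀n]; norm_num⟩
    rw [h2] at hlt
    exact lt_irrefl _ hlt
  have himg : (sh X).toFinite.toFinset.image (fun w => w * s⁻¹)
      = (sh X).toFinite.toFinset := by
    apply Finset.eq_of_subset_of_card_le
    · intro t ht
      obtain ⟨w, hw, rfl⟩ := Finset.mem_image.mp ht
      exact (Set.Finite.mem_toFinset _).mpr (hall w hw)
    · rw [Finset.card_image_of_injective _ (mul_left_injective s⁻¹)]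
  rintro ⟨x1, x2⟩ hx
  have hx2 : x2 = Multiplicative.ofAdd (1 : ZMod 2) :=
    congrArg Prod.snd (out_form hXc hx)
  subst hx2
  have hx1 : x1 ∈ (sh X).toFinite.toFinset := (Set.Finite.mem_toFinset _).mpr hx
  rw [← himg] at hx1
  obtain ⟨w, hw, hweq⟩ := Finset.mem_image.mp hx1
  have hwv : w = s * x1 := by
    rw [mul_inv_eq_iff_eq_mul] at hweq
    rw [hweq, mul_comm]
  have hwX : w ∈ sh X := (Set.Finite.mem_toFinset _).mp hw
  rw [hwv] at hwX
  show ((s, 1) : H × Multiplicative (ZMod 2)) * (x1, Multiplicative.ofAdd (1 : ZMod 2)) ∈ X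
  rw [Prod.mk_mul_mk, one_mul]
  exact hwX

end Stmt11Aux
theorem stmt11 {H : Type*} [CommGroup H] [Fintype H] (hodd : Odd (Fintype.card H))
    (A : SchurRing (H × Multiplicative (ZMod 2)))
    (hH : A.isASet (Set.range fun h : H => (h, (1 : Multiplicative (ZMod 2)))))
    (ha : ¬ A.isASet {((1 : H), Multiplicative.ofAdd (1 : ZMod 2))}) :
    ∃ L : Subgroup H, L ≠ ⊥ ∧
      ∀ X ∈ A.P,
        X ⊆ (Set.range fun h : H => (h, (1 : Multiplicative (ZMod 2))))ᶜ →
        ∀ x ∈ X, ∀ l ∈ L,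
          ((l, (1 : Multiplicative (ZMod 2))) : H × Multiplicative (ZMod 2)) * x ∈ X := by
  classical
  have hH' : clsum (Stmt11Aux.Hr H) ∈ Stmt11Aux.SA A := hH
  obtain ⟨B, hB, haB⟩ := A.cover (Stmt11Aux.aa H)
  have hBc : B ⊆ (Stmt11Aux.Hr H)ᶜ := by
    rcases Stmt11Aux.basic_in_or_out hH' hB with h | h
    · exact absurd (h haB) Stmt11Aux.aa_not_Hr
    · exact h
  set S : Set H := Stmt11Aux.sh B with hS
  have h1S : (1 : H) ∈ S := haB
  have hstab : ∀ X ∈ A.P, X ⊆ (Stmt11Aux.Hr H)ᶜ → ∀ s ∈ S, ∀ x ∈ X,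
      ((s, (1 : Multiplicative (ZMod 2))) : H × Multiplicative (ZMod 2)) * x ∈ X :=
    fun X hX hXc s hs x hx => Stmt11Aux.stab_key hodd hB haB hX hXc hs x hx
  have hmul : ∀ s ∈ S, ∀ t ∈ S, s * t ∈ S := by
    intro s hs t ht
    have hm := hstab B hB hBc s hs (t, Multiplicative.ofAdd (1 : ZMod 2)) ht
    rwa [Prod.mk_mul_mk, one_mul] at hm
  have hpow : ∀ t ∈ S, ∀ k : ℕ, t ^ (k + 1) ∈ S := by
    intro t ht k
    induction k with
    | zero => simpa using ht
    | succ k ih =>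
      rw [pow_succ]
      exact hmul _ ih _ ht
  have hinv : ∀ t ∈ S, t⁻¹ ∈ S := by
    intro t ht
    by_cases h1 : orderOf t = 1
    · have ht1 : t = 1 := orderOf_eq_one_iff.mp h1
      rw [ht1, inv_one]; exact h1S
    · have ho : 0 < orderOf t := orderOf_pos t
      have hto : t ^ orderOf t = 1 := pow_orderOf_eq_one t
      have hstep : t ^ (orderOf t - 1) * t = 1 := by
        rw [← pow_succ]
        have : orderOf t - 1 + 1 = orderOf t := by omega
        rw [this]
        exact hto
      have hti : t ^ (orderOf t - 1) = t⁻¹ := eq_inv_of_mul_eq_one_left hstep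
      obtain ⟨k, hk⟩ : ∃ k, orderOf t - 1 = k + 1 := ⟨orderOf t - 2, by omega⟩
      rw [← hti, hk]
      exact hpow t ht k
  let L : Subgroup H :=
    { carrier := S
      one_mem' := h1S
      mul_mem' := fun {a b} ha' hb' => hmul a ha' b hb'
      inv_mem' := fun {a} ha' => hinv a ha' }
  refine ⟨L, ?_, ?_⟩
  · intro hbot
    apply ha
    have hBeq : B = {((1 : H), Multiplicative.ofAdd (1 : ZMod 2))} := by
      apply Set.eq_singleton_iff_unique_mem.mpr
      refine ⟨haB, ?_⟩
      rintro ⟨x1, x2⟩ hx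
      have hx2 : x2 = Multiplicative.ofAdd (1 : ZMod 2) :=
        congrArg Prod.snd (Stmt11Aux.out_form hBc hx)
      subst hx2
      have hx1S : x1 ∈ S := hx
      have hx1L : x1 ∈ L := hx1S
      rw [hbot, Subgroup.mem_bot] at hx1L
      rw [hx1L]
    show clsum _ ∈ _
    rw [← hBeq]
    exact Stmt11Aux.basic_mem hB
  · intro X hX hXc x hx l hl
    exact hstab X hX hXc l hl x hx
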